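/- Let K > 1 and L > 0. The function z ↦ δ*(z) = −(1/2)·(L·(K+1)/(K−1) − z) + (1/2)·√( (L·(K+1)/(K−1) − z)² + 4·z·L/(K−1) ) is strictly increasing on (0, ∞). -/
import Mathlib

/-- The function `z ↦ δ*(z) = −(1/2)(L(K+1)/(K−1) − z) + (1/2)√((L(K+1)/(K−1) − z)² + 4zL/(K−1))`
is strictly increasing on `(0, ∞)`. -/
theorem stmt_6 (K L : ℝ) (hK : 1 < K) (hL : 0 < L) :
    StrictMonoOn
      (fun z : ℝ => -(1 / 2) * (L * (K + 1) / (K - 1) - z) +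
        (1 / 2) * Real.sqrt ((L * (K + 1) / (K - 1) - z) ^ 2 + 4 * z * L / (K - 1)))
      (Set.Ioi (0 : ℝ)) := by
  have hK1 : (0:ℝ) < K - 1 := by linarith
  set C : ℝ := L * (K + 1) / (K - 1) with hC
  set b : ℝ := 4 * L / (K - 1) with hb
  have hbpos : 0 < b := by positivity
  have hbC : b < 4 * C := by
    have h4C : 4 * C = 4 * L * (K + 1) / (K - 1) := by rw [hC]; ring
    rw [hb, h4C, div_lt_div_iff₀ hK1 hK1]
    nlinarith [mul_pos (mul_pos hL hK1) (by linarith : (0:ℝ) < K)]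
  have key : ∀ x ∈ interior (Set.Ioi (0:ℝ)), 0 < deriv
      (fun z : ℝ => -(1 / 2) * (C - z) +
        (1 / 2) * Real.sqrt ((C - z) ^ 2 + 4 * z * L / (K - 1))) x := by
    intro x hx
    rw [interior_Ioi] at hx
    have hxpos : (0:ℝ) < x := hx
    have hu : (0:ℝ) < (C - x) ^ 2 + 4 * x * L / (K - 1) := by
      have : (0:ℝ) < 4 * x * L / (K - 1) := by positivity
      nlinarith [sq_nonneg (C - x)]
    have hU : HasDerivAt (fun z : ℝ => (C - z) ^ 2 + 4 * z * L / (K - 1))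
        (2 * (C - x) ^ 1 * (0 - 1) + 4 * 1 * L / (K - 1)) x := by
      exact (((hasDerivAt_const x C).sub (hasDerivAt_id x)).pow 2).add
        ((((hasDerivAt_id x).const_mul 4).mul_const L).div_const (K - 1))
    have hS : HasDerivAt (fun z : ℝ => Real.sqrt ((C - z) ^ 2 + 4 * z * L / (K - 1)))
        (1 / (2 * Real.sqrt ((C - x) ^ 2 + 4 * x * L / (K - 1))) *
          (2 * (C - x) ^ 1 * (0 - 1) + 4 * 1 * L / (K - 1))) x :=
      (Real.hasDerivAt_sqrt hu.ne').comp x hU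
    have hF : HasDerivAt
        (fun z : ℝ => -(1 / 2) * (C - z) +
          (1 / 2) * Real.sqrt ((C - z) ^ 2 + 4 * z * L / (K - 1)))
        (-(1/2) * (0 - 1) + (1/2) * (1 / (2 * Real.sqrt ((C - x) ^ 2 + 4 * x * L / (K - 1))) *
          (2 * (C - x) ^ 1 * (0 - 1) + 4 * 1 * L / (K - 1)))) x :=
      (((hasDerivAt_const x C).sub (hasDerivAt_id x)).const_mul (-(1/2))).add (hS.const_mul (1/2))
    rw [hF.deriv]
    set s : ℝ := Real.sqrt ((C - x) ^ 2 + 4 * x * L / (K - 1)) with hs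
    have hspos : 0 < s := Real.sqrt_pos.mpr hu
    have hs2 : s ^ 2 = (C - x) ^ 2 + b * x := by
      rw [hs, Real.sq_sqrt hu.le, hb]; ring
    have hAlt : (2 * (C - x) - b) < 2 * s := by
      have h4 : (2 * (C - x) - b)^2 < 4 * s ^ 2 := by
        rw [hs2]
        nlinarith [mul_pos hbpos hxpos, mul_pos hbpos (by linarith : 0 < 4 * C - b)]
      nlinarith [mul_pos hspos hspos]
    have hval : -(1/2) * ((0:ℝ) - 1) + (1/2) * (1 / (2 * s) *
        (2 * (C - x) ^ 1 * (0 - 1) + 4 * 1 * L / (K - 1)))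
        = (2 * s - (2 * (C - x) - b)) / (4 * s) := by
      rw [hb]
      field_simp
      ring
    rw [hval]
    exact div_pos (by linarith) (by positivity)
  exact strictMonoOn_of_deriv_pos (convex_Ioi 0)
    (Continuous.continuousOn (by fun_prop)) key
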